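/- For every u ≤ 0, the function g(u) = E(u)²·(3·E(u)² - 4·u·E(u) + u² - 2) satisfies g(u) ≤ 1/18. -/
import Mathlib


open MeasureTheory Real Filter

/-- The standard normal density. -/
noncomputable def gphi (u : ℝ) : ℝ := Real.exp (-u ^ 2 / 2) / Real.sqrt (2 * Real.pi)

/-- The standard normal CDF. -/
noncomputable def gPhi (u : ℝ) : ℝ := ∫ s in Set.Iic u, gphi s

/-- The standard normal tail. -/
noncomputable def gPhiBar (u : ℝ) : ℝ := 1 - gPhi u

/-- The inverse Mills ratio. -/
noncomputable def mills (u : ℝ) : ℝ := gphi u / gPhiBar u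

/-- P(r) = E[tanh²(√r Z)]. -/
noncomputable def Pfun (r : ℝ) : ℝ := ∫ z : ℝ, Real.tanh (Real.sqrt r * z) ^ 2 * gphi z

/-- B(q). -/
noncomputable def Bfun (κ q : ℝ) : ℝ :=
  (1 - q) * ∫ z : ℝ, mills ((κ - Real.sqrt q * z) / Real.sqrt (1 - q)) ^ 2 * gphi z

/-- C_κ. -/
noncomputable def Ckappa (κ : ℝ) : ℝ := ∫ z : ℝ, max (κ - z) 0 ^ 2 * gphi z

/-- The critical capacity. -/
noncomputable def alphac (κ : ℝ) : ℝ := 2 / (Real.pi * Ckappa κ)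

/-- g(u) = E(u)²(3E(u)² - 4uE(u) + u² - 2). -/
noncomputable def gfun (u : ℝ) : ℝ :=
  mills u ^ 2 * (3 * mills u ^ 2 - 4 * u * mills u + u ^ 2 - 2)

/- ### Auxiliary lemmas -/

lemma gphi_pos (x : ℝ) : 0 < gphi x := by
  unfold gphi
  have h : 0 < Real.sqrt (2 * Real.pi) := Real.sqrt_pos.mpr (by positivity)
  positivity

lemma gphi_even (x : ℝ) : gphi (-x) = gphi x := by unfold gphi; norm_num

lemma gphi_continuous : Continuous gphi := by
  unfold gphi
  fun_prop

lemma gphi_integrable : Integrable gphi := by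
  have h : Integrable fun x : ℝ => Real.exp (-(1/2 : ℝ) * x ^ 2) :=
    integrable_exp_neg_mul_sq (by norm_num)
  have := h.div_const (Real.sqrt (2 * Real.pi))
  convert this using 2 with x
  unfold gphi
  ring_nf

lemma gphi_total : ∫ x : ℝ, gphi x = 1 := by
  have h : (fun x : ℝ => gphi x) = fun x => Real.exp (-(1/2 : ℝ) * x ^ 2) / Real.sqrt (2 * Real.pi) := by
    funext x; unfold gphi; ring_nf
  rw [h, integral_div, integral_gaussian]
  rw [show Real.pi / (1/2 : ℝ) = 2 * Real.pi by ring]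
  have h2 : 0 < Real.sqrt (2 * Real.pi) := Real.sqrt_pos.mpr (by positivity)
  field_simp

lemma gPhi_add_Ioi (u : ℝ) : gPhi u + ∫ x in Set.Ioi u, gphi x = 1 := by
  rw [gPhi, intervalIntegral.integral_Iic_add_Ioi gphi_integrable.integrableOn gphi_integrable.integrableOn,
    gphi_total]

lemma gPhiBar_eq_Ioi (u : ℝ) : gPhiBar u = ∫ x in Set.Ioi u, gphi x := by
  have := gPhi_add_Ioi u
  unfold gPhiBar; linarith

lemma gPhiBar_eq_gPhi_neg (u : ℝ) : gPhiBar u = gPhi (-u) := by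
  rw [gPhiBar_eq_Ioi]
  have h := integral_comp_neg_Ioi u gphi
  simp_rw [gphi_even] at h
  rw [h, gPhi]

lemma gPhi_zero : gPhi 0 = 1/2 := by
  have h1 := gPhi_add_Ioi 0
  have h2 := gPhiBar_eq_gPhi_neg 0
  rw [gPhiBar_eq_Ioi] at h2
  rw [neg_zero] at h2
  linarith

lemma gphi_mul_exp (t s : ℝ) : gphi t * Real.exp ((t^2 - s^2)/2) = gphi s := by
  unfold gphi
  rw [div_mul_eq_mul_div, ← Real.exp_add]
  ring_nf

lemma gPhi_lower {t : ℝ} (ht : 0 ≤ t) :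
    1/2 + gphi t * (t + t^3/3 + t^5/15) ≤ gPhi t := by
  have hint : (gPhi t) - gPhi 0 = ∫ s in (0:ℝ)..t, gphi s := by
    rw [gPhi, gPhi, intervalIntegral.integral_Iic_sub_Iic gphi_integrable.integrableOn
      gphi_integrable.integrableOn]
  have hmono : ∫ s in (0:ℝ)..t, gphi t * (1 + (t^2 - s^2)/2 + ((t^2 - s^2)/2)^2/2)
      ≤ ∫ s in (0:ℝ)..t, gphi s := by
    apply intervalIntegral.integral_mono_on ht
    · apply Continuous.intervalIntegrable; fun_prop
    · exact gphi_continuous.intervalIntegrable _ _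
    · intro s hs
      obtain ⟨hs0, hst⟩ := hs
      have hx : (0:ℝ) ≤ (t^2 - s^2)/2 := by nlinarith
      calc gphi t * (1 + (t^2 - s^2)/2 + ((t^2 - s^2)/2)^2/2)
          ≤ gphi t * Real.exp ((t^2 - s^2)/2) := by
            have := Real.quadratic_le_exp_of_nonneg hx
            have hg := (gphi_pos t).le
            nlinarith
        _ = gphi s := gphi_mul_exp t s
  have hpoly : ∫ s in (0:ℝ)..t, gphi t * (1 + (t^2 - s^2)/2 + ((t^2 - s^2)/2)^2/2)
      = gphi t * (t + t^3/3 + t^5/15) := by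
    have h1 : ∀ s : ℝ, gphi t * (1 + (t^2 - s^2)/2 + ((t^2 - s^2)/2)^2/2)
        = gphi t * (1 + t^2/2 + t^4/8) + (gphi t * (-(1/2) - t^2/4)) * s^2
          + (gphi t * (1/8)) * s^4 := by intro s; ring
    simp_rw [h1]
    rw [intervalIntegral.integral_add (by apply Continuous.intervalIntegrable; fun_prop)
        (by apply Continuous.intervalIntegrable; fun_prop),
      intervalIntegral.integral_add (by apply Continuous.intervalIntegrable; fun_prop)
        (by apply Continuous.intervalIntegrable; fun_prop),
      intervalIntegral.integral_const, intervalIntegral.integral_const_mul,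
      intervalIntegral.integral_const_mul, integral_pow, integral_pow]
    push_cast
    simp only [smul_eq_mul]
    ring
  rw [hpoly] at hmono
  rw [gPhi_zero] at hint
  linarith

lemma inv_sqrt_le : (Real.sqrt (2 * Real.pi))⁻¹ ≤ 399/1000 := by
  have hpi := Real.pi_gt_d6
  have h : (1000/399 : ℝ) ≤ Real.sqrt (2 * Real.pi) := by
    rw [show (1000/399 : ℝ) = Real.sqrt ((1000/399)^2) by
      rw [Real.sqrt_sq (by norm_num)]]
    apply Real.sqrt_le_sqrt
    nlinarith
  have h2 : (0:ℝ) < Real.sqrt (2 * Real.pi) := by positivity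
  rw [inv_le_comm₀ h2 (by norm_num)]
  calc (399/1000 : ℝ)⁻¹ = 1000/399 := by norm_num
    _ ≤ Real.sqrt (2 * Real.pi) := h

lemma gphi_le (t : ℝ) : gphi t * (1 + t^2/2 + t^4/8) ≤ 399/1000 := by
  have hx : (0:ℝ) ≤ t^2/2 := by positivity
  have hexp : 1 + t^2/2 + t^4/8 ≤ Real.exp (t^2/2) := by
    have := Real.quadratic_le_exp_of_nonneg hx
    calc 1 + t^2/2 + t^4/8 = 1 + t^2/2 + (t^2/2)^2/2 := by ring
      _ ≤ Real.exp (t^2/2) := this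
  have hkey : gphi t * Real.exp (t^2/2) = (Real.sqrt (2 * Real.pi))⁻¹ := by
    unfold gphi
    rw [div_mul_eq_mul_div, ← Real.exp_add,
      show -t^2/2 + t^2/2 = (0:ℝ) by ring, Real.exp_zero, one_div]
  calc gphi t * (1 + t^2/2 + t^4/8) ≤ gphi t * Real.exp (t^2/2) := by
        have := (gphi_pos t).le
        exact mul_le_mul_of_nonneg_left hexp this
    _ = (Real.sqrt (2 * Real.pi))⁻¹ := hkey
    _ ≤ 399/1000 := inv_sqrt_le

lemma keypoly {t : ℝ} (ht : 0 ≤ t) :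
    18 * ((399/1000:ℝ)^2 * (3*(399/1000:ℝ)^2
        + 4*t*((399/1000)*((1 + t^2/2 + t^4/8)/2 + (399/1000)*(t + t^3/3 + t^5/15)))
        + (t^2-2)*((1 + t^2/2 + t^4/8)/2 + (399/1000)*(t + t^3/3 + t^5/15))^2))
      ≤ ((1 + t^2/2 + t^4/8)/2 + (399/1000)*(t + t^3/3 + t^5/15))^4 := by
  nlinarith [pow_nonneg ht 1, pow_nonneg ht 2, pow_nonneg ht 3, pow_nonneg ht 4,
    pow_nonneg ht 5, pow_nonneg ht 6, pow_nonneg ht 7, pow_nonneg ht 8,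
    pow_nonneg ht 9, pow_nonneg ht 10, pow_nonneg ht 11, pow_nonneg ht 12,
    pow_nonneg ht 13, pow_nonneg ht 14, pow_nonneg ht 15, pow_nonneg ht 16,
    pow_nonneg ht 17, pow_nonneg ht 18, pow_nonneg ht 19, pow_nonneg ht 20]

set_option maxHeartbeats 1000000 in
lemma main_bound (t p F : ℝ) (ht : 0 ≤ t) (hp : 0 < p)
    (hFlow : 1/2 + p * (t + t^3/3 + t^5/15) ≤ F)
    (hpD : p * (1 + t^2/2 + t^4/8) ≤ 399/1000) :
    (p/F)^2 * (3*(p/F)^2 + 4*t*(p/F) + t^2 - 2) ≤ 1/18 := by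
  obtain ⟨S, hSdef⟩ : ∃ S : ℝ, S = t + t^3/3 + t^5/15 := ⟨_, rfl⟩
  obtain ⟨D, hDdef⟩ : ∃ D : ℝ, D = 1 + t^2/2 + t^4/8 := ⟨_, rfl⟩
  rw [← hSdef] at hFlow
  rw [← hDdef] at hpD
  have hS : 0 ≤ S := by rw [hSdef]; positivity
  have hD : 0 < D := by rw [hDdef]; positivity
  have hF : 0 < F := by nlinarith [mul_nonneg hp.le hS]
  obtain ⟨W, hWdef⟩ : ∃ W : ℝ, W = D/2 + (399/1000)*S := ⟨_, rfl⟩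
  have hW : 0 < W := by rw [hWdef]; linarith
  obtain ⟨M, hMdef⟩ : ∃ M : ℝ, M = (399/1000)/W := ⟨_, rfl⟩
  have hM0 : 0 < M := by rw [hMdef]; exact div_pos (by norm_num) hW
  obtain ⟨e, hedef⟩ : ∃ e : ℝ, e = p/F := ⟨_, rfl⟩
  rw [← hedef]
  have he0 : 0 ≤ e := by rw [hedef]; positivity
  have heM : e ≤ M := by
    rw [hedef, hMdef, div_le_div_iff₀ hF hW, hWdef]
    nlinarith [hpD, mul_le_mul_of_nonneg_left hFlow (by norm_num : (0:ℝ) ≤ 399/1000)]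
  have hkey := keypoly ht
  rw [← hDdef, ← hSdef, ← hWdef] at hkey
  have hMbound : M^2 * (3*M^2 + 4*t*M + t^2 - 2) ≤ 1/18 := by
    have hformula : M^2 * (3*M^2 + 4*t*M + t^2 - 2)
        = ((399/1000:ℝ)^2 * (3*(399/1000:ℝ)^2 + 4*t*((399/1000)*W) + (t^2-2)*W^2)) / W^4 := by
      rw [hMdef]; field_simp; ring
    rw [hformula, div_le_iff₀ (by positivity)]
    linarith
  have hbr : 3*e^2 + 4*t*e + t^2 - 2 ≤ 3*M^2 + 4*t*M + t^2 - 2 := by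
    nlinarith [mul_nonneg ht (sub_nonneg.mpr heM), mul_le_mul heM heM he0 hM0.le]
  have hsq : e^2 ≤ M^2 := by nlinarith
  rcases le_or_gt (3*M^2 + 4*t*M + t^2 - 2) 0 with hneg | hpos
  · nlinarith [mul_nonneg (sq_nonneg e) (neg_nonneg.mpr (hbr.trans hneg))]
  · have h1 := mul_le_mul_of_nonneg_left hbr (sq_nonneg e)
    have h2 := mul_le_mul_of_nonneg_right hsq hpos.le
    linarith

theorem stmt_12 (u : ℝ) (hu : u ≤ 0) : gfun u ≤ 1 / 18 := by
  have ht : 0 ≤ -u := by linarith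
  have h := main_bound (-u) (gphi (-u)) (gPhi (-u)) ht (gphi_pos _)
    (gPhi_lower ht) (gphi_le _)
  have hm : mills u = gphi (-u) / gPhi (-u) := by
    rw [mills, gPhiBar_eq_gPhi_neg, gphi_even]
  have hg : gfun u = (gphi (-u) / gPhi (-u))^2 *
      (3*(gphi (-u) / gPhi (-u))^2 + 4*(-u)*(gphi (-u) / gPhi (-u)) + (-u)^2 - 2) := by
    rw [gfun, hm]; ring
  rw [hg]; exact h
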